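/- arXiv:0811.0783 — 5 statements merged into one kernel-verified Lean document; each statement's English description precedes it below -/
import Mathlib

section
/- (Busch's joint measurability criterion) Let a, b ∈ ℝ³ with ‖a‖ ≤ 1 and ‖b‖ ≤ 1. Then the simple qubit observables E^{1,a} and E^{1,b} are jointly measurable if and only if ‖a + b‖ + ‖a − b‖ ≤ 2. -/
open Matrix
open scoped ComplexOrder

noncomputable section

/-- 2×2 complex matrices. -/
abbrev Mat2 := Matrix (Fin 2) (Fin 2) ℂ

/-- The Pauli matrix σ₁. -/
def sigma1 : Mat2 := !![0, 1; 1, 0]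
/-- The Pauli matrix σ₂. -/
def sigma2 : Mat2 := !![0, -Complex.I; Complex.I, 0]
/-- The Pauli matrix σ₃. -/
def sigma3 : Mat2 := !![1, 0; 0, -1]

/-- ℝ³ with the Euclidean norm. -/
abbrev E3 := EuclideanSpace ℝ (Fin 3)

/-- For `v ∈ ℝ³`, `v·σ = v₁σ₁ + v₂σ₂ + v₃σ₃`. -/
def dotSigma (v : E3) : Mat2 := (v 0 : ℂ) • sigma1 + (v 1 : ℂ) • sigma2 + (v 2 : ℂ) • sigma3

/-- `A^{α,a} = (1/2)(α·I + a·σ)`. -/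
def Amat (α : ℝ) (a : E3) : Mat2 := (2 : ℂ)⁻¹ • ((α : ℂ) • (1 : Mat2) + dotSigma a)

/-- An operator is an effect if `0 ≤ A ≤ I` in the Loewner order. -/
def IsEffect (A : Mat2) : Prop := A.PosSemidef ∧ (1 - A).PosSemidef

/-- The Loewner order: `A ≤ B` iff `B - A` is positive semidefinite. -/
def loewnerLE (A B : Mat2) : Prop := (B - A).PosSemidef

/-- The simple (two-outcome) qubit observable `E^{α,a}`,
with `E^{α,a}(1) = A^{α,a}` and `E^{α,a}(0) = I - A^{α,a}`. -/
def Eobs (α : ℝ) (a : E3) : Fin 2 → Mat2 := fun i => if i = 1 then Amat α a else 1 - Amat α a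

/-- `G` is a joint observable of the two-outcome observables `E` and `F`. -/
def IsJointObs (G : Fin 2 → Fin 2 → Mat2) (E F : Fin 2 → Mat2) : Prop :=
  (∀ i j, (G i j).PosSemidef) ∧ (∑ i, ∑ j, G i j) = 1 ∧
    (∀ i, (∑ j, G i j) = E i) ∧ (∀ j, (∑ i, G i j) = F j)

/-- Joint measurability of two two-outcome observables. -/
def JointlyMeasurable2 (E F : Fin 2 → Mat2) : Prop := ∃ G, IsJointObs G E F

/-- `G` is a joint observable of the three two-outcome observables `E`, `F` and `K`. -/
def IsJointObs3 (G : Fin 2 → Fin 2 → Fin 2 → Mat2) (E F K : Fin 2 → Mat2) : Prop :=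
  (∀ i j k, (G i j k).PosSemidef) ∧ (∑ i, ∑ j, ∑ k, G i j k) = 1 ∧
    (∀ i, (∑ j, ∑ k, G i j k) = E i) ∧ (∀ j, (∑ i, ∑ k, G i j k) = F j) ∧
    (∀ k, (∑ i, ∑ j, G i j k) = K k)

/-- Joint measurability of three two-outcome observables. -/
def JointlyMeasurable3 (E F K : Fin 2 → Mat2) : Prop := ∃ G, IsJointObs3 G E F K


lemma psd_iff (p r : ℝ) (q : ℂ) :
    (!![(p:ℂ), starRingEnd ℂ q; q, (r:ℂ)]).PosSemidef ↔
      0 ≤ p ∧ 0 ≤ r ∧ Complex.normSq q ≤ p * r := by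
  rw [posSemidef_iff_dotProduct_mulVec]
  constructor
  · rintro ⟨hherm, hq⟩
    have h1 := (Complex.le_def.mp (hq ![1, 0])).1
    have h2 := (Complex.le_def.mp (hq ![0, 1])).1
    have h3 := (Complex.le_def.mp (hq ![(r:ℂ), -q])).1
    have h4 := (Complex.le_def.mp (hq ![-(starRingEnd ℂ q), (p:ℂ)])).1
    have h5 := (Complex.le_def.mp (hq ![1, -q])).1
    simp [dotProduct, mulVec, Fin.sum_univ_two, Complex.add_re, Complex.mul_re] at h1 h2 h3 h4 h5
    have h3' : 0 ≤ r * (p * r - (q.re*q.re + q.im*q.im)) := by linarith [h3]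
    have h4' : 0 ≤ p * (p * r - (q.re*q.re + q.im*q.im)) := by linarith [h4]
    have h5' : 0 ≤ p - 2*(q.re*q.re + q.im*q.im) + r*(q.re*q.re + q.im*q.im) := by
      linarith [h5]
    refine ⟨by linarith, by linarith, ?_⟩
    rw [Complex.normSq_apply]
    by_contra hcon
    push_neg at hcon
    have hnq : 0 ≤ q.re*q.re + q.im*q.im := by nlinarith [sq_nonneg q.re, sq_nonneg q.im]
    rcases eq_or_lt_of_le h2 with hr0 | hrpos
    · have hpr0 : p * r = 0 := by rw [← hr0]; ring
      have hnqpos : 0 < q.re*q.re + q.im*q.im := by linarith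
      have hp0 : p = 0 := by nlinarith [h4']
      nlinarith [h5']
    · nlinarith [h3']
  · rintro ⟨hp, hr, hpr⟩
    constructor
    · ext i j
      fin_cases i <;> fin_cases j <;>
        simp [Matrix.conjTranspose_apply, Complex.ext_iff]
    · intro x
      have hE : star x ⬝ᵥ (!![(p:ℂ), starRingEnd ℂ q; q, (r:ℂ)]) *ᵥ x =
          ((p * Complex.normSq (x 0) + r * Complex.normSq (x 1)
            + 2 * ((starRingEnd ℂ) (x 0) * ((starRingEnd ℂ) q) * x 1).re : ℝ) : ℂ) := by
        apply Complex.ext <;>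
          simp [dotProduct, mulVec, Fin.sum_univ_two, Complex.normSq_apply,
            Complex.add_re, Complex.mul_re, Complex.add_im, Complex.mul_im] <;> ring
      rw [hE, Complex.zero_le_real]
      set A := ‖x 0‖ with hA
      set B := ‖x 1‖ with hB
      set Q := ‖q‖ with hQ
      have hw : -(A * Q * B) ≤ ((starRingEnd ℂ) (x 0) * ((starRingEnd ℂ) q) * x 1).re := by
        have := Complex.abs_re_le_norm ((starRingEnd ℂ) (x 0) * ((starRingEnd ℂ) q) * x 1)
        have habs : ‖(starRingEnd ℂ) (x 0) * ((starRingEnd ℂ) q) * x 1‖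
            = A * Q * B := by
          simp [_root_.map_mul, Complex.norm_conj, hA, hB, hQ]
        rw [habs] at this
        cases abs_le.mp this with
        | intro h _ => linarith
      have hnsq0 : Complex.normSq (x 0) = A^2 := (Complex.sq_norm (x 0)).symm
      have hnsq1 : Complex.normSq (x 1) = B^2 := (Complex.sq_norm (x 1)).symm
      have hQ2 : Q^2 ≤ p * r := by rw [hQ, Complex.sq_norm]; exact hpr
      have hQs : Q ≤ Real.sqrt p * Real.sqrt r := by
        rw [← Real.sqrt_mul hp]
        exact (Real.le_sqrt (norm_nonneg q) (mul_nonneg hp hr)).mpr hQ2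
      have hsp : Real.sqrt p ^ 2 = p := Real.sq_sqrt hp
      have hsr : Real.sqrt r ^ 2 = r := Real.sq_sqrt hr
      have hAB : 0 ≤ A * B := mul_nonneg (norm_nonneg _) (norm_nonneg _)
      have h6 : 0 ≤ (Real.sqrt p * Real.sqrt r - Q) * (A * B) :=
        mul_nonneg (by linarith) hAB
      rw [hnsq0, hnsq1]
      nlinarith [sq_nonneg (Real.sqrt p * A - Real.sqrt r * B), h6, hw,
        Real.sqrt_nonneg p, Real.sqrt_nonneg r]

def hM (t : ℝ) (m : E3) : Mat2 := (2 : ℂ)⁻¹ • ((t : ℂ) • (1 : Mat2) + dotSigma m)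
lemma hM_eq (t : ℝ) (m : E3) :
    hM t m = !![((t : ℂ) + (m 2 : ℂ))/2, ((m 0 : ℂ) - (m 1 : ℂ)*Complex.I)/2;
                ((m 0 : ℂ) + (m 1 : ℂ)*Complex.I)/2, ((t : ℂ) - (m 2 : ℂ))/2] := by
  ext i j
  fin_cases i <;> fin_cases j <;>
    simp [hM, dotSigma, sigma1, sigma2, sigma3, Matrix.one_apply] <;> ring

lemma norm_E3 (m : E3) : ‖m‖ = Real.sqrt (m 0 ^ 2 + m 1 ^ 2 + m 2 ^ 2) := by
  rw [EuclideanSpace.norm_eq]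
  congr 1
  rw [Fin.sum_univ_three]
  simp [Real.norm_eq_abs, sq_abs]

lemma normE3_le_iff (m : E3) (t : ℝ) :
    ‖m‖ ≤ t ↔ 0 ≤ t ∧ m 0 ^ 2 + m 1 ^ 2 + m 2 ^ 2 ≤ t ^ 2 := by
  rw [norm_E3]
  constructor
  · intro h
    have h0 : (0:ℝ) ≤ Real.sqrt (m 0 ^ 2 + m 1 ^ 2 + m 2 ^ 2) := Real.sqrt_nonneg _
    refine ⟨le_trans h0 h, ?_⟩
    have := Real.sq_sqrt (by positivity : (0:ℝ) ≤ m 0 ^ 2 + m 1 ^ 2 + m 2 ^ 2)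
    nlinarith [h, h0]
  · rintro ⟨ht, hsq⟩
    rw [show t = Real.sqrt (t^2) by rw [Real.sqrt_sq ht]]
    exact Real.sqrt_le_sqrt hsq

lemma psd_hM (t : ℝ) (m : E3) : (hM t m).PosSemidef ↔ ‖m‖ ≤ t := by
  have hshape : hM t m =
      !![(( (t + m 2)/2 : ℝ) : ℂ), starRingEnd ℂ (((m 0 : ℝ) : ℂ)/2 + ((m 1 : ℝ):ℂ)/2 * Complex.I);
         (((m 0 : ℝ) : ℂ)/2 + ((m 1 : ℝ):ℂ)/2 * Complex.I), (((t - m 2)/2 : ℝ) : ℂ)] := by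
    rw [hM_eq]
    ext i j
    fin_cases i <;> fin_cases j <;>
      simp [Complex.ext_iff] <;> ring_nf <;> simp <;> ring
  rw [hshape, psd_iff, normE3_le_iff]
  constructor
  · rintro ⟨h1, h2, h3⟩
    simp [Complex.normSq_apply] at h3
    constructor
    · linarith
    · nlinarith [h3]
  · rintro ⟨ht, hsq⟩
    have habs : |m 2| ≤ t := by nlinarith [sq_nonneg (m 0), sq_nonneg (m 1), abs_nonneg (m 2), sq_abs (m 2)]
    have h2 := abs_le.mp habs
    refine ⟨by linarith, by linarith, ?_⟩
    simp [Complex.normSq_apply]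
    nlinarith [hsq]

lemma hM_add (t s : ℝ) (m n : E3) : hM t m + hM s n = hM (t + s) (m + n) := by
  rw [hM_eq, hM_eq, hM_eq]
  ext i j
  fin_cases i <;> fin_cases j <;> simp [PiLp.add_apply] <;> ring

lemma hM_two_zero : hM 2 0 = 1 := by
  rw [hM_eq]
  ext i j
  fin_cases i <;> fin_cases j <;> simp [Matrix.one_apply]

def tOf (M : Mat2) : ℝ := (M 0 0).re + (M 1 1).re
def mOf (M : Mat2) : E3 := WithLp.toLp 2 ![2*(M 1 0).re, 2*(M 1 0).im, (M 0 0).re - (M 1 1).re]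

lemma tOf_hM (t : ℝ) (m : E3) : tOf (hM t m) = t := by
  rw [hM_eq]; simp [tOf]; ring

lemma mOf_hM (t : ℝ) (m : E3) : mOf (hM t m) = m := by
  rw [hM_eq]
  ext i
  fin_cases i <;> simp [mOf] <;> ring

lemma hM_inj {t s : ℝ} {m n : E3} (h : hM t m = hM s n) : t = s ∧ m = n :=
  ⟨by rw [← tOf_hM t m, h, tOf_hM], by rw [← mOf_hM t m, h, mOf_hM]⟩

lemma herm_eq_hM {M : Mat2} (h : M.IsHermitian) : M = hM (tOf M) (mOf M) := by
  have h00 := congrFun (congrFun h.symm 0) 0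
  have h11 := congrFun (congrFun h.symm 1) 1
  have h01 := congrFun (congrFun h.symm 0) 1
  simp [Matrix.conjTranspose_apply] at h00 h11 h01
  rw [hM_eq]
  ext i j
  fin_cases i <;> fin_cases j <;>
    simp [tOf, mOf] <;>
    apply Complex.ext <;>
    simp [Complex.ext_iff] at h00 h11 h01 ⊢ <;>
    first
      | linarith [h01.1]
      | linarith [h01.2]
      | linarith [h00]
      | linarith [h11]
      | ring

lemma hM_congr {t s : ℝ} {m n : E3} (h1 : t = s) (h2 : m = n) : hM t m = hM s n := by
  rw [h1, h2]

lemma Amat_eq_hM (a : E3) : Amat 1 a = hM 1 a := rfl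

lemma Eobs_one (a : E3) : Eobs 1 a 1 = hM 1 a := by
  simp [Eobs, Amat_eq_hM]

lemma Eobs_zero (a : E3) : Eobs 1 a 0 = hM 1 (-a) := by
  simp [Eobs, Amat_eq_hM]
  rw [sub_eq_iff_eq_add, hM_add]
  rw [show (-a) + a = 0 by abel, show (1:ℝ)+1 = 2 by norm_num, hM_two_zero]

/-- Busch: `E^{1,a}` and `E^{1,b}` are jointly measurable iff
`‖a + b‖ + ‖a - b‖ ≤ 2`. -/
theorem busch_criterion (a b : E3) (ha : ‖a‖ ≤ 1) (hb : ‖b‖ ≤ 1) :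
    JointlyMeasurable2 (Eobs 1 a) (Eobs 1 b) ↔ ‖a + b‖ + ‖a - b‖ ≤ 2 := by
  constructor
  · rintro ⟨G, hpos, hsum, hE, hF⟩
    have hd : ∀ i j, G i j = hM (tOf (G i j)) (mOf (G i j)) :=
      fun i j => herm_eq_hM (hpos i j).1
    have hnorm : ∀ i j, ‖mOf (G i j)‖ ≤ tOf (G i j) :=
      fun i j => (psd_hM _ _).mp (by rw [← hd i j]; exact hpos i j)
    have e1 : tOf (G 1 0) + tOf (G 1 1) = 1 ∧ mOf (G 1 0) + mOf (G 1 1) = a := by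
      apply hM_inj
      rw [← hM_add, ← hd, ← hd]
      have h := hE 1
      rw [Fin.sum_univ_two] at h
      rw [h, Eobs_one]
    have e0 : tOf (G 0 0) + tOf (G 0 1) = 1 ∧ mOf (G 0 0) + mOf (G 0 1) = -a := by
      apply hM_inj
      rw [← hM_add, ← hd, ← hd]
      have h := hE 0
      rw [Fin.sum_univ_two] at h
      rw [h, Eobs_zero]
    have f1 : tOf (G 0 1) + tOf (G 1 1) = 1 ∧ mOf (G 0 1) + mOf (G 1 1) = b := by
      apply hM_inj
      rw [← hM_add, ← hd, ← hd]
      have h := hF 1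
      rw [Fin.sum_univ_two] at h
      rw [h, Eobs_one]
    have f0 : tOf (G 0 0) + tOf (G 1 0) = 1 ∧ mOf (G 0 0) + mOf (G 1 0) = -b := by
      apply hM_inj
      rw [← hM_add, ← hd, ← hd]
      have h := hF 0
      rw [Fin.sum_univ_two] at h
      rw [h, Eobs_zero]
    have hab : a + b = mOf (G 1 1) - mOf (G 0 0) := by
      have h1 : a + b = (mOf (G 1 0) + mOf (G 1 1)) - (mOf (G 0 0) + mOf (G 1 0)) := by
        rw [e1.2, f0.2]; abel
      rw [h1]; abel
    have hab' : a - b = mOf (G 1 0) - mOf (G 0 1) := by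
      rw [← e1.2, ← f1.2]
      abel
    have n1 : ‖a + b‖ ≤ ‖mOf (G 1 1)‖ + ‖mOf (G 0 0)‖ := by
      rw [hab]; exact norm_sub_le _ _
    have n2 : ‖a - b‖ ≤ ‖mOf (G 1 0)‖ + ‖mOf (G 0 1)‖ := by
      rw [hab']; exact norm_sub_le _ _
    linarith [hnorm 0 0, hnorm 0 1, hnorm 1 0, hnorm 1 1, e1.1, e0.1, n1, n2]
  · intro h
    set z := (‖a + b‖ - ‖a - b‖)/2 with hz
    refine ⟨fun i j =>
      if i = 1 then
        (if j = 1 then hM ((1+z)/2) ((2:ℝ)⁻¹ • (a+b)) else hM ((1-z)/2) ((2:ℝ)⁻¹ • (a-b)))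
      else
        (if j = 1 then hM ((1-z)/2) ((2:ℝ)⁻¹ • (b-a)) else hM ((1+z)/2) ((2:ℝ)⁻¹ • (-a-b))),
      ?_, ?_, ?_, ?_⟩
    · intro i j
      have hpb : ‖a + b‖ ≤ 1 + z := by rw [hz]; linarith
      have hmb : ‖a - b‖ ≤ 1 - z := by rw [hz]; linarith
      have e : ∀ v : E3, ‖(2:ℝ)⁻¹ • v‖ = ‖v‖ / 2 := fun v => by
        rw [norm_smul, Real.norm_eq_abs, abs_of_nonneg (by norm_num : (0:ℝ) ≤ 2⁻¹)]; ring
      fin_cases i <;> fin_cases j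
      · show (hM ((1+z)/2) ((2:ℝ)⁻¹ • (-a-b))).PosSemidef
        rw [psd_hM, show -a-b = -(a+b) by abel, e, norm_neg]; linarith
      · show (hM ((1-z)/2) ((2:ℝ)⁻¹ • (b-a))).PosSemidef
        rw [psd_hM, e, norm_sub_rev]; linarith
      · show (hM ((1-z)/2) ((2:ℝ)⁻¹ • (a-b))).PosSemidef
        rw [psd_hM, e]; linarith
      · show (hM ((1+z)/2) ((2:ℝ)⁻¹ • (a+b))).PosSemidef
        rw [psd_hM, e]; linarith
    · simp [Fin.sum_univ_two, hM_add]
      rw [show ((1+z)/2 + (1-z)/2) + ((1-z)/2 + (1+z)/2) = 2 by ring]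
      have h2 : ∀ v : E3, v = 0 → hM 2 v = 1 := fun v hv => by rw [hv, hM_two_zero]
      apply h2
      module
    · intro i
      fin_cases i <;> simp [Fin.sum_univ_two, hM_add]
      · rw [Eobs_zero]; exact hM_congr (by ring) (by module)
      · rw [Eobs_one]; exact hM_congr (by ring) (by module)
    · intro j
      fin_cases j <;> simp [Fin.sum_univ_two, hM_add]
      · rw [Eobs_zero]; exact hM_congr (by ring) (by module)
      · rw [Eobs_one]; exact hM_congr (by ring) (by module)
end
end

section
/- (Molnár's joint measurability criterion) Let a, b ∈ ℝ³ be nonzero, non-parallel vectors (a is not a real scalar multiple of b) with ‖a‖ ≤ 1 and ‖b‖ ≤ 1. Then the simple qubit observables E^{‖a‖,a} and E^{‖b‖,b} are jointly measurable if and only if ‖a + b‖ + ‖a‖ + ‖b‖ ≤ 2. -/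
open Matrix
open scoped ComplexOrder

noncomputable section

lemma Amat_eq (γ : ℝ) (v : E3) :
    Amat γ v = !![((γ:ℂ) + v 2)/2, ((v 0 : ℂ) - Complex.I * v 1)/2;
                  ((v 0 : ℂ) + Complex.I * v 1)/2, ((γ:ℂ) - v 2)/2] := by
  ext i j
  fin_cases i <;> fin_cases j <;>
    simp [Amat, dotSigma, sigma1, sigma2, sigma3, Matrix.one_apply] <;> ring

lemma normsq_E3 (v : E3) : ‖v‖^2 = v 0^2 + v 1^2 + v 2^2 := by
  rw [EuclideanSpace.norm_eq, Real.sq_sqrt] <;>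
  simp [Fin.sum_univ_three, sq_abs] <;> positivity

lemma key_real (g v0 v1 v2 s t u w : ℝ) (hg : v0^2+v1^2+v2^2 ≤ g^2) (hg0 : 0 ≤ g)
    (hs : 0 ≤ s) (ht : 0 ≤ t) (huw : u^2 + w^2 = s*t) :
    0 ≤ g*(s+t) + (v2*(s-t) + 2*v0*u + 2*v1*w) := by
  have hY2 : (v2*(s-t) + 2*v0*u + 2*v1*w)^2 ≤ (g*(s+t))^2 := by
    nlinarith [sq_nonneg (v2*(2*u) - v0*(s-t)), sq_nonneg (v2*(2*w) - v1*(s-t)),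
      sq_nonneg (v0*(2*w) - v1*(2*u)), sq_nonneg (s+t), sq_nonneg (s-t), mul_nonneg hs ht]
  nlinarith [sq_nonneg (g*(s+t) + (v2*(s-t) + 2*v0*u + 2*v1*w)), mul_nonneg hg0 (add_nonneg hs ht)]

lemma qf_Amat (γ : ℝ) (v : E3) (x : Fin 2 → ℂ) :
    star x ⬝ᵥ (Amat γ v) *ᵥ x =
      ((2⁻¹ * (γ * ((Complex.normSq (x 0)) + Complex.normSq (x 1))
        + (v 2 * (Complex.normSq (x 0) - Complex.normSq (x 1))
          + 2 * v 0 * ((x 0).re * (x 1).re + (x 0).im * (x 1).im)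
          + 2 * v 1 * ((x 0).re * (x 1).im - (x 0).im * (x 1).re))) : ℝ) : ℂ) := by
  apply Complex.ext <;>
    simp [Amat_eq, Matrix.mulVec, dotProduct, Fin.sum_univ_two, Complex.normSq_apply,
      Complex.div_re, Complex.div_im, Complex.normSq] <;> ring

lemma posSemidef_Amat {γ : ℝ} {v : E3} (h : ‖v‖ ≤ γ) : (Amat γ v).PosSemidef := by
  refine Matrix.PosSemidef.of_dotProduct_mulVec_nonneg ?_ ?_
  · ext i j
    fin_cases i <;> fin_cases j <;>
      simp [Amat_eq, Matrix.conjTranspose_apply, Complex.ext_iff, Complex.div_re, Complex.div_im,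
        Complex.normSq] <;> ring
  · intro x
    rw [qf_Amat, Complex.zero_le_real]
    have hg0 : 0 ≤ γ := le_trans (norm_nonneg v) h
    have hg : v 0^2 + v 1^2 + v 2^2 ≤ γ^2 := by
      rw [← normsq_E3]; exact pow_le_pow_left₀ (norm_nonneg v) h 2
    have := key_real γ (v 0) (v 1) (v 2) (Complex.normSq (x 0)) (Complex.normSq (x 1))
      ((x 0).re * (x 1).re + (x 0).im * (x 1).im) ((x 0).re * (x 1).im - (x 0).im * (x 1).re)
      hg hg0 (Complex.normSq_nonneg _) (Complex.normSq_nonneg _)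
      (by simp [Complex.normSq_apply]; ring)
    nlinarith [this]

lemma psd_mulVec_eq_zero {M : Mat2} (hM : M.PosSemidef) {w : Fin 2 → ℂ}
    (hw : star w ⬝ᵥ M *ᵥ w = 0) : M *ᵥ w = 0 := by
  obtain ⟨B, rfl⟩ : ∃ B : Mat2, M = Bᴴ * B := by
    open scoped MatrixOrder in exact CStarAlgebra.nonneg_iff_eq_star_mul_self.mp hM.nonneg
  have h1 : star (B *ᵥ w) ⬝ᵥ (B *ᵥ w) = 0 := by
    rw [← hw, ← Matrix.mulVec_mulVec, Matrix.star_mulVec, ← Matrix.dotProduct_mulVec]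
  have h2 : B *ᵥ w = 0 := dotProduct_star_self_eq_zero.mp h1
  rw [← Matrix.mulVec_mulVec, h2, Matrix.mulVec_zero]

lemma norm_le_of_posSemidef_Amat {γ : ℝ} {v : E3} (h : (Amat γ v).PosSemidef) : ‖v‖ ≤ γ := by
  set n := ‖v‖ with hn
  have hn0 : 0 ≤ n := norm_nonneg v
  have hnsq : n^2 = v 0^2 + v 1^2 + v 2^2 := normsq_E3 v
  have h1 := h.dotProduct_mulVec_nonneg ![1, 0]
  have h2 := h.dotProduct_mulVec_nonneg ![0, 1]
  have h3 := h.dotProduct_mulVec_nonneg ![(v 0 : ℂ) - Complex.I * v 1, ((-(n + v 2) : ℝ) : ℂ)]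
  rw [qf_Amat, Complex.zero_le_real] at h1 h2 h3
  simp [Complex.normSq_apply] at h1 h2 h3
  -- h1 : 0 ≤ γ + v 2 (/2), h2 : 0 ≤ γ - v 2, h3 : big
  rcases eq_or_lt_of_le hn0 with hn' | hn'
  · linarith
  · rcases lt_or_eq_of_le (show -n ≤ v 2 by nlinarith) with hv | hv
    · have key : 0 ≤ 2*(n + v 2)*(n*(γ - n)) := by nlinarith [h3]
      nlinarith [key, mul_pos (show (0:ℝ) < n + v 2 by linarith) hn']
    · nlinarith

lemma Amat_ker1 (a : E3) :
    Amat ‖a‖ a *ᵥ ![(a 0 : ℂ) - Complex.I * a 1, ((-(‖a‖ + a 2) : ℝ) : ℂ)] = 0 := by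
  have h : (‖a‖:ℂ)^2 = (a 0:ℂ)^2 + (a 1:ℂ)^2 + (a 2:ℂ)^2 := by
    exact_mod_cast congrArg (fun r : ℝ => (r : ℂ)) (normsq_E3 a)
  funext i
  fin_cases i <;>
    simp [Amat_eq, Matrix.mulVec, dotProduct, Fin.sum_univ_two] <;>
    push_cast <;>
    first
      | linear_combination (1/2 : ℂ) * h
      | linear_combination (-1/2 : ℂ) * h
      | linear_combination ((1/2 : ℂ) * (a 1:ℂ)^2) * Complex.I_sq
      | linear_combination ((-1/2 : ℂ) * (a 1:ℂ)^2) * Complex.I_sq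
      | linear_combination (1/2 : ℂ) * h + ((1/2 : ℂ) * (a 1:ℂ)^2) * Complex.I_sq
      | linear_combination (-1/2 : ℂ) * h + ((-1/2 : ℂ) * (a 1:ℂ)^2) * Complex.I_sq
      | linear_combination (1/2 : ℂ) * h + ((-1/2 : ℂ) * (a 1:ℂ)^2) * Complex.I_sq
      | linear_combination (-1/2 : ℂ) * h + ((1/2 : ℂ) * (a 1:ℂ)^2) * Complex.I_sq
      | ring

lemma Amat_ker2 (a : E3) :
    Amat ‖a‖ a *ᵥ ![((‖a‖ - a 2 : ℝ) : ℂ), -(a 0 : ℂ) - Complex.I * a 1] = 0 := by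
  have h : (‖a‖:ℂ)^2 = (a 0:ℂ)^2 + (a 1:ℂ)^2 + (a 2:ℂ)^2 := by
    exact_mod_cast congrArg (fun r : ℝ => (r : ℂ)) (normsq_E3 a)
  funext i
  fin_cases i <;>
    simp [Amat_eq, Matrix.mulVec, dotProduct, Fin.sum_univ_two] <;>
    push_cast <;>
    first
      | linear_combination (1/2 : ℂ) * h
      | linear_combination (-1/2 : ℂ) * h
      | linear_combination ((1/2 : ℂ) * (a 1:ℂ)^2) * Complex.I_sq
      | linear_combination ((-1/2 : ℂ) * (a 1:ℂ)^2) * Complex.I_sq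
      | linear_combination (1/2 : ℂ) * h + ((1/2 : ℂ) * (a 1:ℂ)^2) * Complex.I_sq
      | linear_combination (-1/2 : ℂ) * h + ((-1/2 : ℂ) * (a 1:ℂ)^2) * Complex.I_sq
      | linear_combination (1/2 : ℂ) * h + ((-1/2 : ℂ) * (a 1:ℂ)^2) * Complex.I_sq
      | linear_combination (-1/2 : ℂ) * h + ((1/2 : ℂ) * (a 1:ℂ)^2) * Complex.I_sq
      | ring

lemma G_ker {G A : Mat2} (hG : G.PosSemidef) (hAG : (A - G).PosSemidef) {w : Fin 2 → ℂ}
    (hw : A *ᵥ w = 0) : G *ᵥ w = 0 := by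
  apply psd_mulVec_eq_zero hG
  have h1 := hG.dotProduct_mulVec_nonneg w
  have h2 := hAG.dotProduct_mulVec_nonneg w
  rw [Matrix.sub_mulVec, dotProduct_sub, hw, dotProduct_zero] at h2
  exact le_antisymm (by simpa using sub_nonneg.mp h2) h1

lemma comb_zero {x y : ℝ} (h : (x:ℂ) + Complex.I * y = 0) : x = 0 ∧ y = 0 := by
  have h1 := congrArg Complex.re h
  have h2 := congrArg Complex.im h
  simp at h1 h2
  exact ⟨h1, h2⟩

lemma comb_zero' {x y : ℝ} (h : (x:ℂ) - Complex.I * y = 0) : x = 0 ∧ y = 0 := by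
  have := comb_zero (x := x) (y := -y) (by push_cast; linear_combination h)
  exact ⟨this.1, by linarith [this.2]⟩

lemma parallel_axis (a b : E3) (hb0 : b ≠ 0)
    (h0 : a 0 = 0) (h1 : a 1 = 0) (h0b : b 0 = 0) (h1b : b 1 = 0) : ∃ t : ℝ, a = t • b := by
  have hb2 : b 2 ≠ 0 := by
    intro h
    apply hb0
    ext i
    fin_cases i <;> simpa
  refine ⟨a 2 / b 2, ?_⟩
  ext i
  fin_cases i <;> simp [h0, h1, h0b, h1b] <;> field_simp

lemma parallel_of_E (a b : E3) (hb0 : b ≠ 0) (hβ : 0 < ‖b‖)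
    (E5 : ((a 0:ℂ) - Complex.I*(a 1))*((‖b‖:ℝ)+b 2) = ((b 0:ℂ) - Complex.I*(b 1))*((‖a‖:ℝ)+a 2))
    (E6 : ((a 0:ℂ) + Complex.I*(a 1))*((‖b‖:ℝ)-b 2) = ((b 0:ℂ) + Complex.I*(b 1))*((‖a‖:ℝ)-a 2)) :
    ∃ t : ℝ, a = t • b := by
  set α := ‖a‖
  set β := ‖b‖
  have e5r := congrArg Complex.re E5
  have e5i := congrArg Complex.im E5
  have e6r := congrArg Complex.re E6
  have e6i := congrArg Complex.im E6
  simp at e5r e5i e6r e6i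
  -- derive the real equations
  have hA0 : β * a 0 = α * b 0 := by linarith
  have hA1 : β * a 1 = α * b 1 := by linarith
  have hc0 : a 0 * b 2 = a 2 * b 0 := by linarith
  have hc1 : a 1 * b 2 = a 2 * b 1 := by linarith
  by_cases hb01 : b 0 = 0 ∧ b 1 = 0
  · have ha0' : a 0 = 0 := by
      have h : β * a 0 = 0 := by rw [hb01.1] at hA0; simpa using hA0
      exact (mul_eq_zero.mp h).resolve_left (ne_of_gt hβ)
    have ha1' : a 1 = 0 := by
      have h : β * a 1 = 0 := by rw [hb01.2] at hA1; simpa using hA1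
      exact (mul_eq_zero.mp h).resolve_left (ne_of_gt hβ)
    exact parallel_axis a b hb0 ha0' ha1' hb01.1 hb01.2
  · have h2 : β * a 2 = α * b 2 := by
      rcases not_and_or.mp hb01 with h | h
      · have := mul_left_cancel₀ h (show b 0 * (β * a 2) = b 0 * (α * b 2) by
          linear_combination b 2 * hA0 - β * hc0)
        linarith
      · have := mul_left_cancel₀ h (show b 1 * (β * a 2) = b 1 * (α * b 2) by
          linear_combination b 2 * hA1 - β * hc1)
        linarith
    refine ⟨α / β, ?_⟩
    ext i
    have hβ' : β ≠ 0 := ne_of_gt hβ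
    fin_cases i <;> simp <;> field_simp <;> linarith

lemma G_eq_zero (a b : E3) (ha0 : a ≠ 0) (hb0 : b ≠ 0) (hpar : ¬ ∃ t : ℝ, a = t • b)
    {G : Mat2} (hG : G.PosSemidef) (hA : (Amat ‖a‖ a - G).PosSemidef)
    (hB : (Amat ‖b‖ b - G).PosSemidef) : G = 0 := by
  have hα : 0 < ‖a‖ := norm_pos_iff.mpr ha0
  have hβ : 0 < ‖b‖ := norm_pos_iff.mpr hb0
  have ka1 := G_ker hG hA (Amat_ker1 a)
  have ka2 := G_ker hG hA (Amat_ker2 a)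
  have kb1 := G_ker hG hB (Amat_ker1 b)
  have kb2 := G_ker hG hB (Amat_ker2 b)
  have e1 : G 0 0 * ((a 0:ℂ) - Complex.I*(a 1)) = G 0 1 * ((‖a‖:ℝ)+(a 2)) := by
    have h := congrFun ka1 0
    simp [Matrix.mulVec, dotProduct, Fin.sum_univ_two] at h
    push_cast at h ⊢
    linear_combination h
  have e2 : G 1 0 * ((a 0:ℂ) - Complex.I*(a 1)) = G 1 1 * ((‖a‖:ℝ)+(a 2)) := by
    have h := congrFun ka1 1
    simp [Matrix.mulVec, dotProduct, Fin.sum_univ_two] at h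
    push_cast at h ⊢
    linear_combination h
  have e3 : G 0 0 * (((‖a‖:ℝ):ℂ)-(a 2)) = G 0 1 * ((a 0:ℂ) + Complex.I*(a 1)) := by
    have h := congrFun ka2 0
    simp [Matrix.mulVec, dotProduct, Fin.sum_univ_two] at h
    push_cast at h ⊢
    linear_combination h
  have e4 : G 1 0 * (((‖a‖:ℝ):ℂ)-(a 2)) = G 1 1 * ((a 0:ℂ) + Complex.I*(a 1)) := by
    have h := congrFun ka2 1
    simp [Matrix.mulVec, dotProduct, Fin.sum_univ_two] at h
    push_cast at h ⊢
    linear_combination h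
  have f1 : G 0 0 * ((b 0:ℂ) - Complex.I*(b 1)) = G 0 1 * ((‖b‖:ℝ)+(b 2)) := by
    have h := congrFun kb1 0
    simp [Matrix.mulVec, dotProduct, Fin.sum_univ_two] at h
    push_cast at h ⊢
    linear_combination h
  have f2 : G 1 0 * ((b 0:ℂ) - Complex.I*(b 1)) = G 1 1 * ((‖b‖:ℝ)+(b 2)) := by
    have h := congrFun kb1 1
    simp [Matrix.mulVec, dotProduct, Fin.sum_univ_two] at h
    push_cast at h ⊢
    linear_combination h
  have f3 : G 0 0 * (((‖b‖:ℝ):ℂ)-(b 2)) = G 0 1 * ((b 0:ℂ) + Complex.I*(b 1)) := by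
    have h := congrFun kb2 0
    simp [Matrix.mulVec, dotProduct, Fin.sum_univ_two] at h
    push_cast at h ⊢
    linear_combination h
  have f4 : G 1 0 * (((‖b‖:ℝ):ℂ)-(b 2)) = G 1 1 * ((b 0:ℂ) + Complex.I*(b 1)) := by
    have h := congrFun kb2 1
    simp [Matrix.mulVec, dotProduct, Fin.sum_univ_two] at h
    push_cast at h ⊢
    linear_combination h
  have hp : G 0 0 = 0 := by
    by_contra hp
    apply hpar
    apply parallel_of_E a b hb0 hβ
    · apply mul_left_cancel₀ hp
      push_cast
      linear_combination ((‖b‖:ℂ)+(b 2)) * e1 - ((‖a‖:ℂ)+(a 2)) * f1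
    · apply mul_left_cancel₀ hp
      push_cast
      linear_combination ((a 0:ℂ)+Complex.I*(a 1)) * f3 - ((b 0:ℂ)+Complex.I*(b 1)) * e3
  have hq : G 1 1 = 0 := by
    by_contra hq
    apply hpar
    by_cases hz' : G 1 0 = 0
    · have hA : (a 0:ℂ) + Complex.I * (a 1) = 0 := by
        rcases mul_eq_zero.mp (show G 1 1 * ((a 0:ℂ)+Complex.I*(a 1)) = 0 by
          rw [← e4, hz']; ring) with h|h
        · exact absurd h hq
        · exact h
      have hB : (b 0:ℂ) + Complex.I * (b 1) = 0 := by
        rcases mul_eq_zero.mp (show G 1 1 * ((b 0:ℂ)+Complex.I*(b 1)) = 0 by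
          rw [← f4, hz']; ring) with h|h
        · exact absurd h hq
        · exact h
      obtain ⟨ha1, ha2⟩ := comb_zero hA
      obtain ⟨hb1, hb2⟩ := comb_zero hB
      exact parallel_axis a b hb0 ha1 ha2 hb1 hb2
    · apply parallel_of_E a b hb0 hβ
      · apply mul_left_cancel₀ hz'
        push_cast
        linear_combination ((‖b‖:ℂ)+(b 2)) * e2 - ((‖a‖:ℂ)+(a 2)) * f2
      · apply mul_left_cancel₀ hq
        push_cast
        linear_combination ((‖a‖:ℂ)-(a 2)) * f4 - ((‖b‖:ℂ)-(b 2)) * e4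
  have hz : G 0 1 = 0 := by
    by_contra hz
    apply hpar
    have hA : (a 0:ℂ) + Complex.I * (a 1) = 0 := by
      rcases mul_eq_zero.mp (show G 0 1 * ((a 0:ℂ)+Complex.I*(a 1)) = 0 by
        rw [← e3, hp]; ring) with h|h
      · exact absurd h hz
      · exact h
    have hB : (b 0:ℂ) + Complex.I * (b 1) = 0 := by
      rcases mul_eq_zero.mp (show G 0 1 * ((b 0:ℂ)+Complex.I*(b 1)) = 0 by
        rw [← f3, hp]; ring) with h|h
      · exact absurd h hz
      · exact h
    obtain ⟨ha1, ha2⟩ := comb_zero hA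
    obtain ⟨hb1, hb2⟩ := comb_zero hB
    exact parallel_axis a b hb0 ha1 ha2 hb1 hb2
  have hz' : G 1 0 = 0 := by
    by_contra hz'
    apply hpar
    have hA : (a 0:ℂ) - Complex.I * (a 1) = 0 := by
      rcases mul_eq_zero.mp (show G 1 0 * ((a 0:ℂ)-Complex.I*(a 1)) = 0 by
        rw [e2, hq]; ring) with h|h
      · exact absurd h hz'
      · exact h
    have hB : (b 0:ℂ) - Complex.I * (b 1) = 0 := by
      rcases mul_eq_zero.mp (show G 1 0 * ((b 0:ℂ)-Complex.I*(b 1)) = 0 by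
        rw [f2, hq]; ring) with h|h
      · exact absurd h hz'
      · exact h
    obtain ⟨ha1, ha2⟩ := comb_zero' hA
    obtain ⟨hb1, hb2⟩ := comb_zero' hB
    exact parallel_axis a b hb0 ha1 ha2 hb1 hb2
  ext i j
  fin_cases i <;> fin_cases j <;> simp [hp, hq, hz, hz']

lemma one_sub_sub (α β : ℝ) (a b : E3) :
    (1 : Mat2) - Amat α a - Amat β b = Amat (2 - α - β) (-(a+b)) := by
  have h0 : (-(a+b) : E3) 0 = -(a 0 + b 0) := rfl
  have h1 : (-(a+b) : E3) 1 = -(a 1 + b 1) := rfl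
  have h2 : (-(a+b) : E3) 2 = -(a 2 + b 2) := rfl
  ext i j
  fin_cases i <;> fin_cases j <;>
    simp [Amat_eq, Matrix.one_apply, h0, h1, h2] <;> push_cast <;> ring


/-- Molnár: for nonzero non-parallel `a`, `b`, the observables
`E^{‖a‖,a}` and `E^{‖b‖,b}` are jointly measurable iff `‖a + b‖ + ‖a‖ + ‖b‖ ≤ 2`. -/
theorem molnar_criterion (a b : E3) (ha0 : a ≠ 0) (hb0 : b ≠ 0)
    (hpar : ¬ ∃ t : ℝ, a = t • b) (ha : ‖a‖ ≤ 1) (hb : ‖b‖ ≤ 1) :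
    JointlyMeasurable2 (Eobs ‖a‖ a) (Eobs ‖b‖ b) ↔ ‖a + b‖ + ‖a‖ + ‖b‖ ≤ 2 := by
  constructor
  · rintro ⟨G, hGpos, hGsum, hrow, hcol⟩
    have hr1 := hrow 1
    have hr0 := hrow 0
    have hc1 := hcol 1
    rw [Fin.sum_univ_two] at hr1 hr0 hc1
    simp [Eobs] at hr1 hr0 hc1
    have hA : (Amat ‖a‖ a - G 1 1).PosSemidef := by
      have h : G 1 0 = Amat ‖a‖ a - G 1 1 := by rw [← hr1]; abel
      rw [← h]; exact hGpos 1 0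
    have hB : (Amat ‖b‖ b - G 1 1).PosSemidef := by
      have h : G 0 1 = Amat ‖b‖ b - G 1 1 := by rw [← hc1]; abel
      rw [← h]; exact hGpos 0 1
    have hz := G_eq_zero a b ha0 hb0 hpar (hGpos 1 1) hA hB
    have h00 : G 0 0 = 1 - Amat ‖a‖ a - Amat ‖b‖ b := by
      have h01 : G 0 1 = Amat ‖b‖ b := by rw [← hc1, hz]; abel
      rw [← hr0, h01]; abel
    have hkey := norm_le_of_posSemidef_Amat
      (show (Amat (2 - ‖a‖ - ‖b‖) (-(a+b))).PosSemidef by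
        rw [← one_sub_sub, ← h00]; exact hGpos 0 0)
    rw [norm_neg] at hkey
    linarith
  · intro h
    refine ⟨fun i j => if i = 1 then (if j = 1 then 0 else Amat ‖a‖ a)
      else (if j = 1 then Amat ‖b‖ b else 1 - Amat ‖a‖ a - Amat ‖b‖ b), ?_, ?_, ?_, ?_⟩
    · intro i j
      fin_cases i <;> fin_cases j <;> simp
      · rw [one_sub_sub]
        exact posSemidef_Amat (by rw [norm_neg]; linarith)
      · exact posSemidef_Amat le_rfl
      · exact posSemidef_Amat le_rfl
      · exact Matrix.PosSemidef.zero
    · simp [Fin.sum_univ_two]; try abel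
    · intro i; fin_cases i <;> simp [Eobs, Fin.sum_univ_two] <;> try abel
    · intro j; fin_cases j <;> simp [Eobs, Fin.sum_univ_two] <;> try abel
end
end

section
/- (Busch–Andersson et al. criterion for three orthogonal qubit observables) Let a, b, c ∈ ℝ³ be mutually orthogonal vectors with ‖a‖ ≤ 1, ‖b‖ ≤ 1, ‖c‖ ≤ 1. Then the three simple qubit observables E^{1,a}, E^{1,b}, E^{1,c} are jointly measurable if and only if ‖a‖² + ‖b‖² + ‖c‖² ≤ 1. -/
open Matrix
open scoped ComplexOrder

noncomputable section

/-! ### Auxiliary lemmas -/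

lemma dotSigma_eq (v : E3) :
    dotSigma v = !![(v 2 : ℂ), (v 0 : ℂ) - (v 1 : ℂ) * Complex.I;
                    (v 0 : ℂ) + (v 1 : ℂ) * Complex.I, -(v 2 : ℂ)] := by
  ext i j
  fin_cases i <;> fin_cases j <;>
    simp [dotSigma, sigma1, sigma2, sigma3] <;> ring

lemma norm_sq_E3 (v : E3) : ‖v‖ ^ 2 = v 0 ^ 2 + v 1 ^ 2 + v 2 ^ 2 := by
  rw [EuclideanSpace.norm_eq, Real.sq_sqrt (by positivity)]
  simp [Fin.sum_univ_three, sq_abs]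

lemma dotSigma_lin (r t u : ℝ) (x y z : E3) :
    dotSigma (r • x + t • y + u • z)
      = (r : ℂ) • dotSigma x + (t : ℂ) • dotSigma y + (u : ℂ) • dotSigma z := by
  simp only [dotSigma_eq]
  ext i j
  fin_cases i <;> fin_cases j <;>
    simp [PiLp.add_apply, PiLp.smul_apply] <;> push_cast <;> ring

lemma one_add_dotSigma_eq (w : E3) :
    (1 : Mat2) + dotSigma w
      = !![(1 + w 2 : ℂ), (w 0 : ℂ) - (w 1 : ℂ) * Complex.I;
           (w 0 : ℂ) + (w 1 : ℂ) * Complex.I, (1 - w 2 : ℂ)] := by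
  rw [dotSigma_eq]
  ext i j
  fin_cases i <;> fin_cases j <;> simp [Matrix.one_apply] <;> ring

lemma psd_explicit (w0 w1 w2 : ℝ) (hw : w0 ^ 2 + w1 ^ 2 + w2 ^ 2 ≤ 1) :
    (!![(1 + w2 : ℂ), (w0 : ℂ) - (w1 : ℂ) * Complex.I;
        (w0 : ℂ) + (w1 : ℂ) * Complex.I, (1 - w2 : ℂ)] : Mat2).PosSemidef := by
  rw [posSemidef_iff_dotProduct_mulVec]
  constructor
  · ext i j
    fin_cases i <;> fin_cases j <;>
      simp [conjTranspose_apply, Complex.ext_iff]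
  · intro x
    have hexp : dotProduct (star x)
        ((!![(1 + w2 : ℂ), (w0 : ℂ) - (w1 : ℂ) * Complex.I;
        (w0 : ℂ) + (w1 : ℂ) * Complex.I, (1 - w2 : ℂ)] : Mat2) *ᵥ x)
        = (starRingEnd ℂ (x 0)) * (((1 + w2 : ℂ)) * x 0 + ((w0 : ℂ) - (w1:ℂ)*Complex.I) * x 1)
        + (starRingEnd ℂ (x 1)) * (((w0 : ℂ) + (w1:ℂ)*Complex.I) * x 0 + ((1 - w2 : ℂ)) * x 1) := by
      simp [dotProduct, mulVec, Fin.sum_univ_two]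
    rw [hexp, Complex.le_def]
    set p := (x 0).re; set q := (x 0).im; set r := (x 1).re; set t := (x 1).im
    constructor
    · simp only [Complex.add_re, Complex.mul_re, Complex.mul_im, Complex.add_im,
        Complex.sub_re, Complex.sub_im, Complex.ofReal_re, Complex.ofReal_im,
        Complex.I_re, Complex.I_im, Complex.one_re, Complex.one_im, Complex.zero_re,
        map_apply, RingHom.coe_coe, Complex.conj_re, Complex.conj_im]
      ring_nf
      nlinarith [sq_nonneg (w0*(2*(p*t - q*r)) - w1*(2*(p*r + q*t))),
        sq_nonneg (w0*(p^2+q^2-r^2-t^2) - w2*(2*(p*r+q*t))),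
        sq_nonneg (w1*(p^2+q^2-r^2-t^2) - w2*(2*(p*t - q*r))),
        sq_nonneg (p^2+q^2+r^2+t^2), sq_nonneg p, sq_nonneg q, sq_nonneg r, sq_nonneg t,
        sq_nonneg (p^2+q^2-r^2-t^2), sq_nonneg (p*r+q*t), sq_nonneg (p*t-q*r)]
    · simp only [Complex.add_im, Complex.mul_re, Complex.mul_im, Complex.add_re,
        Complex.sub_re, Complex.sub_im, Complex.ofReal_re, Complex.ofReal_im,
        Complex.I_re, Complex.I_im, Complex.one_re, Complex.one_im, Complex.zero_im,
        map_apply, RingHom.coe_coe, Complex.conj_re, Complex.conj_im]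
      ring

lemma psd_one_add_dotSigma (w : E3) (hw : ‖w‖ ≤ 1) : ((1 : Mat2) + dotSigma w).PosSemidef := by
  rw [one_add_dotSigma_eq]
  refine psd_explicit (w 0) (w 1) (w 2) ?_
  have h2 := norm_sq_E3 w
  nlinarith [norm_nonneg w]

lemma smul_psd (r : ℝ) (hr : 0 ≤ r) (M : Mat2) (h : M.PosSemidef) :
    ((r : ℂ) • M).PosSemidef := by
  rw [posSemidef_iff_dotProduct_mulVec]
  constructor
  · show ((r : ℂ) • M)ᴴ = _
    rw [conjTranspose_smul, h.1.eq]
    simp [Complex.conj_ofReal]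
  · intro x
    rw [smul_mulVec, dotProduct_smul, smul_eq_mul]
    exact mul_nonneg (by exact_mod_cast Complex.zero_le_real.mpr hr) (h.dotProduct_mulVec_nonneg x)

/-- The "trace" functional `γ(M) = (M₀₀ + M₁₁)/2` (real part). -/
def gam (M : Mat2) : ℝ := ((M 0 0).re + (M 1 1).re) / 2

/-- The functional `φ(M, v) = m·v` where `m` is the Bloch vector of `M`. -/
def phi (M : Mat2) (v : E3) : ℝ :=
  (((M 0 1).re + (M 1 0).re) / 2) * v 0 + (((M 1 0).im - (M 0 1).im) / 2) * v 1
    + (((M 0 0).re - (M 1 1).re) / 2) * v 2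

lemma phi_add (M N : Mat2) (v : E3) : phi (M + N) v = phi M v + phi N v := by
  simp [phi, Matrix.add_apply]; ring

lemma gam_add (M N : Mat2) : gam (M + N) = gam M + gam N := by
  simp [gam, Matrix.add_apply]; ring

lemma gam_one : gam 1 = 1 := by
  simp [gam, Matrix.one_apply]

lemma phi_one (v : E3) : phi 1 v = 0 := by
  simp [phi, Matrix.one_apply]

lemma phi_sub (M N : Mat2) (v : E3) : phi (M - N) v = phi M v - phi N v := by
  simp [phi, Matrix.sub_apply]; ring

lemma phi_v_lin (M : Mat2) (e f g : ℝ) (x y z : E3) :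
    phi M (e • x + f • y + g • z) = e * phi M x + f * phi M y + g * phi M z := by
  simp only [phi, PiLp.add_apply, PiLp.smul_apply, smul_eq_mul]
  ring

lemma phi_Amat (x v : E3) : phi (Amat 1 x) v = (x 0 * v 0 + x 1 * v 1 + x 2 * v 2) / 2 := by
  have h : Amat 1 x = (2 : ℂ)⁻¹ • ((1 : Mat2) + dotSigma x) := by
    simp [Amat]
  rw [h, one_add_dotSigma_eq]
  simp [phi, Matrix.smul_apply, Complex.ext_iff]
  ring

lemma quad_expand (M : Mat2) (x : Fin 2 → ℂ) :
    dotProduct (star x) (M *ᵥ x)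
      = (starRingEnd ℂ (x 0)) * (M 0 0 * x 0 + M 0 1 * x 1)
      + (starRingEnd ℂ (x 1)) * (M 1 0 * x 0 + M 1 1 * x 1) := by
  simp [dotProduct, mulVec, Fin.sum_univ_two]

lemma psd_facts (M : Mat2) (h : M.PosSemidef) :
    0 ≤ (M 0 0).re ∧ 0 ≤ (M 1 1).re ∧ (M 0 0).im = 0 ∧ (M 1 1).im = 0 ∧
    (M 1 0).re = (M 0 1).re ∧ (M 1 0).im = -(M 0 1).im ∧
    (M 0 1).re ^ 2 + (M 0 1).im ^ 2 ≤ (M 0 0).re * (M 1 1).re := by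
  have herm := h.1
  have h10 : M 1 0 = starRingEnd ℂ (M 0 1) := by
    have := congrFun (congrFun herm 1) 0
    simpa [Matrix.conjTranspose_apply] using this.symm
  have h00 := h.dotProduct_mulVec_nonneg ![1, 0]
  rw [quad_expand] at h00
  simp at h00
  have h11 := h.dotProduct_mulVec_nonneg ![0, 1]
  rw [quad_expand] at h11
  simp at h11
  rw [Complex.le_def] at h00 h11
  simp at h00 h11
  refine ⟨h00.1, h11.1, h00.2.symm, h11.2.symm, by rw [h10]; simp, by rw [h10]; simp, ?_⟩
  set u := (M 0 1).re; set w := (M 0 1).im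
  set α := (M 0 0).re; set β := (M 1 1).re
  set d := u ^ 2 + w ^ 2 with hd
  have key : ∀ s : ℝ, 0 ≤ s ^ 2 * d * α - 2 * s * d + β := by
    intro s
    have hq := h.dotProduct_mulVec_nonneg ![(s : ℂ) * M 0 1, -1]
    rw [quad_expand] at hq
    rw [Complex.le_def] at hq
    have hre := hq.1
    simp only [Matrix.cons_val_zero, Matrix.cons_val_one, Matrix.head_cons, h10] at hre ⊢
    simp only [Complex.add_re, Complex.mul_re, Complex.mul_im, Complex.add_im,
      Complex.neg_re, Complex.neg_im, Complex.ofReal_re, Complex.ofReal_im,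
      map_apply, RingHom.coe_coe, Complex.conj_re, Complex.conj_im, Complex.one_re,
      Complex.one_im, Complex.zero_re, Complex.zero_im] at hre
    have him0 : (M 0 0).im = 0 := h00.2.symm
    have him1 : (M 1 1).im = 0 := h11.2.symm
    rw [him0, him1] at hre
    ring_nf at hre ⊢
    linarith [hre]
  by_cases hdz : d = 0
  · rw [hdz] at hd ⊢; nlinarith [h00.1, h11.1]
  · have hd0 : 0 < d := lt_of_le_of_ne (by positivity) (Ne.symm hdz)
    have hα : 0 < α := by
      rcases lt_or_eq_of_le h00.1 with h | h
      · exact h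
      · exfalso
        set σ := (β + 1) / (2 * d) with hσdef
        have hσ : σ * (2 * d) = β + 1 := by
          rw [hσdef]; field_simp
        have hk := key σ
        rw [← h] at hk
        nlinarith [hk, hσ]
    have hk := key (1 / α)
    have he : (1/α) ^ 2 * d * α - 2 * (1/α) * d + β = β - d / α := by
      field_simp; ring
    rw [he] at hk
    have := (div_le_iff₀ hα).mp (by linarith : d / α ≤ β)
    nlinarith [this]

set_option maxHeartbeats 1000000 in
lemma phi_le (M : Mat2) (h : M.PosSemidef) (v : E3) : phi M v ≤ gam M * ‖v‖ := by
  obtain ⟨hα, hβ, _, _, hr, hi, hdet⟩ := psd_facts M h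
  set u := (M 0 1).re with hu
  set w := (M 0 1).im with hw
  set α := (M 0 0).re with hαd
  set β := (M 1 1).re with hβd
  set s := ‖v‖ with hsd
  have hs : 0 ≤ s := norm_nonneg v
  obtain ⟨v0, v1, v2, hv0, hv1, hv2⟩ : ∃ v0 v1 v2 : ℝ, v 0 = v0 ∧ v 1 = v1 ∧ v 2 = v2 :=
    ⟨v 0, v 1, v 2, rfl, rfl, rfl⟩
  have hs2 : s ^ 2 = v0 ^ 2 + v1 ^ 2 + v2 ^ 2 := by
    rw [hsd, norm_sq_E3, hv0, hv1, hv2]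
  have hphi : phi M v = u * v0 + (-w) * v1 + ((α - β)/2) * v2 := by
    simp only [phi, hr, hi, hv0, hv1, hv2]; ring
  have hgam : gam M = (α + β)/2 := rfl
  rw [hphi, hgam]
  set γ := (α + β)/2 with hγd
  set m3 := (α - β)/2 with hm3
  have hγ : 0 ≤ γ := by rw [hγd]; linarith
  have hm : u ^ 2 + w ^ 2 + m3 ^ 2 ≤ γ ^ 2 := by
    have : γ ^ 2 - m3 ^ 2 = α * β := by rw [hγd, hm3]; ring
    nlinarith [hdet]
  set X := u * v0 + (-w) * v1 + m3 * v2 with hX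
  have hcs : X ^ 2 ≤ (u ^ 2 + w ^ 2 + m3 ^ 2) * s ^ 2 := by
    rw [hs2, hX]
    nlinarith [sq_nonneg (u * v1 + w * v0), sq_nonneg (u * v2 - m3 * v0),
      sq_nonneg (w * v2 + m3 * v1)]
  have hcs2 : X ^ 2 ≤ (γ * s) ^ 2 := by nlinarith [hcs, hm, sq_nonneg s]
  nlinarith [hcs2, mul_nonneg hγ hs]

/-- Sign function on `Fin 2`. -/
def eps : Fin 2 → ℝ := fun i => if i = 1 then 1 else -1

@[simp] lemma eps_zero : eps 0 = -1 := rfl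
@[simp] lemma eps_one : eps 1 = 1 := rfl

lemma eps_sq (i : Fin 2) : eps i ^ 2 = 1 := by
  fin_cases i <;> norm_num [eps]
lemma norm_comb (a b c : E3) (hab : (inner ℝ a b : ℝ) = 0) (hac : (inner ℝ a c : ℝ) = 0)
    (hbc : (inner ℝ b c : ℝ) = 0) (e f g : ℝ) (he : e ^ 2 = 1) (hf : f ^ 2 = 1)
    (hg : g ^ 2 = 1) :
    ‖e • a + f • b + g • c‖ = Real.sqrt (‖a‖ ^ 2 + ‖b‖ ^ 2 + ‖c‖ ^ 2) := by
  have hba : (inner ℝ b a : ℝ) = 0 := by rw [real_inner_comm]; exact hab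
  have hca : (inner ℝ c a : ℝ) = 0 := by rw [real_inner_comm]; exact hac
  have hcb : (inner ℝ c b : ℝ) = 0 := by rw [real_inner_comm]; exact hbc
  have h2 : ‖e • a + f • b + g • c‖ ^ 2 = ‖a‖ ^ 2 + ‖b‖ ^ 2 + ‖c‖ ^ 2 := by
    rw [← real_inner_self_eq_norm_sq]
    simp only [inner_add_left, inner_add_right, real_inner_smul_left, real_inner_smul_right,
      hab, hac, hbc, hba, hca, hcb, real_inner_self_eq_norm_sq, mul_zero, add_zero, zero_add,
      norm_smul, mul_pow, sq_abs, Real.norm_eq_abs]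
    linear_combination ‖a‖ ^ 2 * he + ‖b‖ ^ 2 * hf + ‖c‖ ^ 2 * hg
  rw [← Real.sqrt_sq (norm_nonneg _), h2]

set_option maxHeartbeats 2000000 in
/-- Busch, Andersson et al.: for mutually orthogonal `a`, `b`, `c`,
the observables `E^{1,a}`, `E^{1,b}`, `E^{1,c}` are jointly measurable iff
`‖a‖² + ‖b‖² + ‖c‖² ≤ 1`. -/
theorem three_orthogonal_criterion (a b c : E3)
    (hab : (inner ℝ a b : ℝ) = 0) (hac : (inner ℝ a c : ℝ) = 0) (hbc : (inner ℝ b c : ℝ) = 0)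
    (ha : ‖a‖ ≤ 1) (hb : ‖b‖ ≤ 1) (hc : ‖c‖ ≤ 1) :
    JointlyMeasurable3 (Eobs 1 a) (Eobs 1 b) (Eobs 1 c) ↔
      ‖a‖ ^ 2 + ‖b‖ ^ 2 + ‖c‖ ^ 2 ≤ 1 := by
  have hS0 : (0:ℝ) ≤ ‖a‖ ^ 2 + ‖b‖ ^ 2 + ‖c‖ ^ 2 := by positivity
  set S := ‖a‖ ^ 2 + ‖b‖ ^ 2 + ‖c‖ ^ 2 with hSdef
  set s := Real.sqrt S with hsdef
  have hs0 : 0 ≤ s := Real.sqrt_nonneg _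
  have hs2 : s ^ 2 = S := Real.sq_sqrt hS0
  have hnorm : ∀ i j k : Fin 2, ‖eps i • a + eps j • b + eps k • c‖ = s := fun i j k =>
    norm_comb a b c hab hac hbc _ _ _ (eps_sq i) (eps_sq j) (eps_sq k)
  constructor
  · rintro ⟨G, hpos, hsum, hEa, hEb, hEc⟩
    have key : ∀ i j k : Fin 2,
        eps i * phi (G i j k) a + eps j * phi (G i j k) b + eps k * phi (G i j k) c
          ≤ gam (G i j k) * s := by
      intro i j k
      have h := phi_le (G i j k) (hpos i j k) (eps i • a + eps j • b + eps k • c)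
      rw [hnorm i j k, phi_v_lin] at h
      exact h
    have k000 := key 0 0 0; have k001 := key 0 0 1
    have k010 := key 0 1 0; have k011 := key 0 1 1
    have k100 := key 1 0 0; have k101 := key 1 0 1
    have k110 := key 1 1 0; have k111 := key 1 1 1
    simp only [eps_zero, eps_one, one_mul, neg_one_mul, neg_mul] at k000 k001 k010 k011 k100 k101 k110 k111
    -- γ sum
    have gsum := congrArg gam hsum
    simp only [Fin.sum_univ_two, gam_add, gam_one] at gsum
    have h1 : gam (G 0 0 0) + gam (G 0 0 1) + gam (G 0 1 0) + gam (G 0 1 1) + gam (G 1 0 0) + gam (G 1 0 1) + gam (G 1 1 0) + gam (G 1 1 1) = 1 := by linarith [gsum]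
    have hR : gam (G 0 0 0) * s + gam (G 0 0 1) * s + gam (G 0 1 0) * s + gam (G 0 1 1) * s + gam (G 1 0 0) * s + gam (G 1 0 1) * s + gam (G 1 1 0) * s + gam (G 1 1 1) * s = s := by
      linear_combination s * h1
    -- φ margin equations
    have phiAmat_self : ∀ x : E3, phi (Amat 1 x) x = ‖x‖ ^ 2 / 2 := by
      intro x
      rw [phi_Amat, norm_sq_E3]; ring
    have phiAmat_self' : ∀ x : E3, phi (1 - Amat 1 x) x = -(‖x‖ ^ 2 / 2) := by
      intro x
      rw [phi_sub, phi_one, phiAmat_self]; ring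
    have Ea1 := congrArg (fun M => phi M a) (hEa 1)
    have Ea0 := congrArg (fun M => phi M a) (hEa 0)
    have Eb1 := congrArg (fun M => phi M b) (hEb 1)
    have Eb0 := congrArg (fun M => phi M b) (hEb 0)
    have Ec1 := congrArg (fun M => phi M c) (hEc 1)
    have Ec0 := congrArg (fun M => phi M c) (hEc 0)
    simp only [Fin.sum_univ_two, phi_add, Eobs, if_pos, if_neg, reduceIte,
      Fin.zero_eta, Fin.mk_one, one_ne_zero, zero_ne_one] at Ea1 Ea0 Eb1 Eb0 Ec1 Ec0
    rw [phiAmat_self] at Ea1 Eb1 Ec1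
    rw [phiAmat_self'] at Ea0 Eb0 Ec0
    have hSs : S ≤ s := by
      have hsum8 := add_le_add (add_le_add (add_le_add (add_le_add (add_le_add
        (add_le_add (add_le_add k000 k001) k010) k011) k100) k101) k110) k111
      linarith [hsum8, hR, Ea1, Ea0, Eb1, Eb0, Ec1, Ec0]
    nlinarith [hSs, hs2, hs0, sq_nonneg (s - 1)]
  · intro hle
    have hs1 : s ≤ 1 := by
      rw [hsdef]
      calc Real.sqrt S ≤ Real.sqrt 1 := Real.sqrt_le_sqrt hle
      _ = 1 := Real.sqrt_one
    refine ⟨fun i j k => ((8⁻¹ : ℝ) : ℂ) • ((1 : Mat2)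
      + dotSigma (eps i • a + eps j • b + eps k • c)), ?_, ?_, ?_, ?_, ?_⟩
    · intro i j k
      refine smul_psd _ (by norm_num) _ (psd_one_add_dotSigma _ ?_)
      rw [hnorm i j k]; exact hs1
    · simp only [Fin.sum_univ_two, dotSigma_lin, eps_zero, eps_one]
      push_cast
      module
    · intro i
      fin_cases i <;>
        (simp only [Fin.sum_univ_two, dotSigma_lin, eps_zero, eps_one, Eobs, Amat,
          Fin.zero_eta, Fin.mk_one, one_ne_zero, zero_ne_one, reduceIte]
         push_cast
         module)
    · intro j
      fin_cases j <;>
        (simp only [Fin.sum_univ_two, dotSigma_lin, eps_zero, eps_one, Eobs, Amat,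
          Fin.zero_eta, Fin.mk_one, one_ne_zero, zero_ne_one, reduceIte]
         push_cast
         module)
    · intro k
      fin_cases k <;>
        (simp only [Fin.sum_univ_two, dotSigma_lin, eps_zero, eps_one, Eobs, Amat,
          Fin.zero_eta, Fin.mk_one, one_ne_zero, zero_ne_one, reduceIte]
         push_cast
         module)
end
end

section
/- Let P be an orthogonal projection on a complex Hilbert space H and let B be an effect on H with PB = BP. Then PB is an effect, PB ≤ P, PB ≤ B, and PB is the greatest element of lb(P,B): for every effect C with C ≤ P and C ≤ B, one has C ≤ PB. -/
open ContinuousLinearMap RCLike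
open scoped InnerProductSpace ComplexConjugate InnerProduct

private lemma quad_aux (a b : ℝ) (ha : 0 ≤ a) (h : ∀ t : ℝ, 0 ≤ t ^ 2 * a + 2 * t * b) :
    b = 0 := by
  have hpos : (0:ℝ) < a + 1 := by linarith
  have h1 := h (-(b / (a + 1)))
  have h2 : (-(b / (a + 1))) ^ 2 * a + 2 * (-(b / (a + 1))) * b
      = -(b ^ 2 * (a + 2)) / (a + 1) ^ 2 := by
    field_simp
    ring
  rw [h2] at h1
  rw [le_div_iff₀ (by positivity : (0:ℝ) < (a+1)^2)] at h1
  have hb : b ^ 2 = 0 := le_antisymm (by nlinarith) (sq_nonneg b)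
  exact (pow_eq_zero_iff two_ne_zero).mp hb

private lemma pos_inner_zero {H : Type*} [NormedAddCommGroup H] [InnerProductSpace ℂ H]
    [CompleteSpace H] {C : H →L[ℂ] H} (hC : C.IsPositive) {x : H}
    (hx : re ⟪C x, x⟫_ℂ = 0) : C x = 0 := by
  have key : ∀ y : H, re ⟪C x, y⟫_ℂ = 0 := by
    intro y
    apply quad_aux (re ⟪C y, y⟫_ℂ) _ (hC.2 y)
    intro t
    have expand : re ⟪C (x + (t:ℂ) • y), x + (t:ℂ) • y⟫_ℂ
        = t ^ 2 * re ⟪C y, y⟫_ℂ + 2 * t * re ⟪C x, y⟫_ℂ := by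
      have hsym : re ⟪C y, x⟫_ℂ = re ⟪C x, y⟫_ℂ := by
        conv_lhs => rw [← hC.isSelfAdjoint.adjoint_eq]
        rw [adjoint_inner_left, inner_re_symm]
      rw [map_add, map_smul]
      simp only [inner_add_left, inner_add_right, inner_smul_left, inner_smul_right,
        Complex.conj_ofReal, map_add, RCLike.ofReal_re, Complex.re_ofReal_mul,
        ← Complex.ofReal_mul, hx, hsym, RCLike.re_to_complex, Complex.add_re]
      simp only [RCLike.re_to_complex] at hsym
      rw [hsym]
      ring
    have := hC.2 (x + (t:ℂ) • y)
    rw [reApplyInnerSelf] at this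
    rw [expand] at this
    exact this
  have := key (C x)
  rw [← norm_eq_zero]
  have h2 : ‖C x‖ ^ 2 = 0 := by rw [← inner_self_eq_norm_sq (𝕜 := ℂ)]; exact this
  exact (pow_eq_zero_iff two_ne_zero).mp h2



/-- if `P` is an orthogonal projection, `B` is an effect and `PB = BP`,
then `PB` is an effect, `PB ≤ P`, `PB ≤ B`, and `PB` is the greatest element of
`lb(P,B)`; here `S ≤ T` is the Loewner order, expressed as `(T - S).IsPositive`. -/
theorem projection_mul_effect_greatest_lower_bound
    {H : Type*} [NormedAddCommGroup H] [InnerProductSpace ℂ H] [CompleteSpace H]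
    (P B : H →L[ℂ] H)
    (hP_sa : IsSelfAdjoint P) (hP_idem : P ∘L P = P)
    (hB_pos : B.IsPositive) (hB_le_one : ((1 : H →L[ℂ] H) - B).IsPositive)
    (hcomm : P ∘L B = B ∘L P) :
    ((P ∘L B).IsPositive ∧ ((1 : H →L[ℂ] H) - P ∘L B).IsPositive) ∧
      (P - P ∘L B).IsPositive ∧ (B - P ∘L B).IsPositive ∧
      ∀ C : H →L[ℂ] H, C.IsPositive → ((1 : H →L[ℂ] H) - C).IsPositive →
        (P - C).IsPositive → (B - C).IsPositive → (P ∘L B - C).IsPositive := by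
  have hPadj : P† = P := hP_sa.adjoint_eq
  have hc : P * B = B * P := hcomm
  have hi : P * P = P := hP_idem
  have hPBPm : P * (B * P) = P * B := by
    rw [← mul_assoc, hc, mul_assoc, hi, ← hc]
  have hPBP : P ∘L (B ∘L P) = P ∘L B := hPBPm
  -- PB is positive
  have h1 : (P ∘L B).IsPositive := by
    have := hB_pos.adjoint_conj P
    rwa [hPadj, hPBP] at this
  -- P - PB is positive
  have h2 : (P - P ∘L B).IsPositive := by
    have := hB_le_one.adjoint_conj P
    rw [hPadj] at this
    have heq : P ∘L (((1 : H →L[ℂ] H) - B) ∘L P) = P - P ∘L B := by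
      show P * ((1 - B) * P) = P - P * B
      simp only [sub_mul, one_mul, mul_sub]
      rw [hi, hPBPm]
    rwa [heq] at this
  -- B - PB is positive
  have hQ_sa : IsSelfAdjoint ((1 : H →L[ℂ] H) - P) := (IsSelfAdjoint.one _).sub hP_sa
  have h3 : (B - P ∘L B).IsPositive := by
    have := hB_pos.adjoint_conj ((1 : H →L[ℂ] H) - P)
    rw [hQ_sa.adjoint_eq] at this
    have heq : ((1 : H →L[ℂ] H) - P) ∘L (B ∘L ((1 : H →L[ℂ] H) - P)) = B - P ∘L B := by
      show (1 - P) * (B * (1 - P)) = B - P * B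
      simp only [mul_sub, sub_mul, one_mul, mul_one]
      rw [hPBPm, hc]
      abel
    rwa [heq] at this
  -- 1 - P is positive
  have h1P : ((1 : H →L[ℂ] H) - P).IsPositive := by
    have := isPositive_one.adjoint_conj ((1 : H →L[ℂ] H) - P)
    rw [hQ_sa.adjoint_eq] at this
    have heq : ((1 : H →L[ℂ] H) - P) ∘L ((1 : H →L[ℂ] H) ∘L ((1 : H →L[ℂ] H) - P))
        = (1 : H →L[ℂ] H) - P := by
      show (1 - P) * (1 * (1 - P)) = 1 - P
      simp only [one_mul, mul_sub, sub_mul, mul_one]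
      rw [hi]
      abel
    rwa [heq] at this
  -- 1 - PB is positive
  have h4 : ((1 : H →L[ℂ] H) - P ∘L B).IsPositive := by
    have := h1P.add h2
    have heq : ((1 : H →L[ℂ] H) - P) + (P - P ∘L B) = (1 : H →L[ℂ] H) - P ∘L B := by abel
    rwa [heq] at this
  refine ⟨⟨h1, h4⟩, h2, h3, ?_⟩
  intro C hC hC1 hCP hCB
  -- C vanishes on the range of 1 - P
  have hker : ∀ y, C (y - P y) = 0 := by
    intro y
    apply pos_inner_zero hC
    have hPx : P (y - P y) = 0 := by
      rw [map_sub, ← ContinuousLinearMap.comp_apply, hP_idem, sub_self]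
    have hle := hCP.2 (y - P y)
    rw [ContinuousLinearMap.reApplyInnerSelf, ContinuousLinearMap.sub_apply, inner_sub_left,
      hPx, inner_zero_left, map_sub, map_zero] at hle
    have hge := hC.2 (y - P y)
    rw [ContinuousLinearMap.reApplyInnerSelf] at hge
    linarith
  have hCPm : C * P = C := by
    ext y
    show C (P y) = C y
    have := hker y
    rw [map_sub, sub_eq_zero] at this
    exact this.symm
  have hPCm : P * C = C := by
    have h := congrArg (fun T : H →L[ℂ] H => T†) hCPm
    have h2 : (C ∘L P)† = C† := h
    rw [ContinuousLinearMap.adjoint_comp, hPadj, hC.isSelfAdjoint.adjoint_eq] at h2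
    exact h2
  have := hCB.adjoint_conj P
  rw [hPadj] at this
  have heq : P ∘L ((B - C) ∘L P) = P ∘L B - C := by
    show P * ((B - C) * P) = P * B - C
    simp only [sub_mul, mul_sub]
    rw [hPBPm, ← mul_assoc, hPCm, hCPm]
  rwa [heq] at this
end

section
/- Let A and B be jointly measurable observables on a complex separable Hilbert space, with outcome spaces (Ω₁,Σ₁) and (Ω₂,Σ₂), and let G be a joint observable of A and B which is the greatest joint observable. Then G is the unique joint observable of A and B: every joint observable F of A and B equals G. -/
open MeasureTheory

noncomputable section

variable (H : Type*) [NormedAddCommGroup H] [InnerProductSpace ℂ H] [CompleteSpace H]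

/-- A quantum observable (normalized positive operator valued measure) on the outcome
space `Ω`: a map assigning to each (measurable) set a bounded operator on `H`, which is
positive on measurable sets, normalized, and weakly countably additive. -/
structure Observable (Ω : Type*) [MeasurableSpace Ω] where
  app : Set Ω → (H →L[ℂ] H)
  isPositive : ∀ X : Set Ω, MeasurableSet X → (app X).IsPositive
  app_univ : app Set.univ = 1
  hasSum : ∀ (ψ : H) (X : ℕ → Set Ω), (∀ n, MeasurableSet (X n)) →
    Pairwise (Function.onFun Disjoint X) →
    HasSum (fun n => (inner ℂ ψ (app (X n) ψ) : ℂ)) (inner ℂ ψ (app (⋃ n, X n) ψ) : ℂ)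

variable {H}

/-- An observable is sharp if its values (on measurable sets) are orthogonal projections. -/
def Observable.Sharp {Ω : Type*} [MeasurableSpace Ω] (A : Observable H Ω) : Prop :=
  ∀ X : Set Ω, MeasurableSet X → IsSelfAdjoint (A.app X) ∧ A.app X ∘L A.app X = A.app X

/-- `G` is a joint observable of `A` and `B`: its margins are `A` and `B`.
The product type `Ω₁ × Ω₂` carries the product σ-algebra. -/
def IsJointObservable {Ω₁ Ω₂ : Type*} [MeasurableSpace Ω₁] [MeasurableSpace Ω₂]
    (A : Observable H Ω₁) (B : Observable H Ω₂) (G : Observable H (Ω₁ × Ω₂)) : Prop :=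
  (∀ X : Set Ω₁, MeasurableSet X → G.app (X ×ˢ (Set.univ : Set Ω₂)) = A.app X) ∧
  (∀ Y : Set Ω₂, MeasurableSet Y → G.app ((Set.univ : Set Ω₁) ×ˢ Y) = B.app Y)

/-- Two observables are jointly measurable if they have a joint observable. -/
def JointlyMeasurable {Ω₁ Ω₂ : Type*} [MeasurableSpace Ω₁] [MeasurableSpace Ω₂]
    (A : Observable H Ω₁) (B : Observable H Ω₂) : Prop :=
  ∃ G : Observable H (Ω₁ × Ω₂), IsJointObservable A B G

/-- The quadratic form of an observable vanishes on the empty set. -/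
lemma Observable.inner_app_empty {Ω : Type*} [MeasurableSpace Ω] (F : Observable H Ω)
    (ψ : H) : (inner ℂ ψ (F.app ∅ ψ) : ℂ) = 0 := by
  have h := F.hasSum ψ (fun _ => ∅) (fun _ => MeasurableSet.empty)
    (fun i j _ => by simp [Function.onFun])
  have h2 : (⋃ _ : ℕ, (∅ : Set Ω)) = (∅ : Set Ω) := by simp
  rw [h2] at h
  have ht := h.summable.tendsto_atTop_zero
  exact tendsto_nhds_unique tendsto_const_nhds ht

/-- Finite (binary) additivity of the quadratic form of an observable. -/
lemma Observable.inner_app_union {Ω : Type*} [MeasurableSpace Ω] (F : Observable H Ω)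
    (ψ : H) {Z₁ Z₂ : Set Ω} (h1 : MeasurableSet Z₁) (h2 : MeasurableSet Z₂)
    (hd : Disjoint Z₁ Z₂) :
    (inner ℂ ψ (F.app (Z₁ ∪ Z₂) ψ) : ℂ) = inner ℂ ψ (F.app Z₁ ψ) + inner ℂ ψ (F.app Z₂ ψ) := by
  set X : ℕ → Set Ω := fun n => if n = 0 then Z₁ else if n = 1 then Z₂ else ∅ with hXdef
  have hmeas : ∀ n, MeasurableSet (X n) := by
    intro n
    simp only [X]
    split_ifs <;> first | exact h1 | exact h2 | exact MeasurableSet.empty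
  have hpd : Pairwise (Function.onFun Disjoint X) := by
    intro i j hij
    simp only [Function.onFun, X]
    split_ifs <;>
      first
        | (exfalso; omega)
        | exact hd
        | exact hd.symm
        | exact Set.disjoint_empty _
        | exact (Set.empty_disjoint _)
  have hU : (⋃ n, X n) = Z₁ ∪ Z₂ := by
    apply Set.Subset.antisymm
    · refine Set.iUnion_subset fun n => ?_
      simp only [X]
      split_ifs <;> simp
    · apply Set.union_subset
      · simpa [X] using Set.subset_iUnion X 0
      · simpa [X] using Set.subset_iUnion X 1
  have hs := F.hasSum ψ X hmeas hpd
  rw [hU] at hs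
  have hzero : ∀ n ∉ ({0, 1} : Finset ℕ), (inner ℂ ψ (F.app (X n) ψ) : ℂ) = 0 := by
    intro n hn
    have hn0 : n ≠ 0 := by simp at hn; omega
    have hn1 : n ≠ 1 := by simp at hn; omega
    simp only [X, if_neg hn0, if_neg hn1]
    exact F.inner_app_empty ψ
  have hs2 : HasSum (fun n => (inner ℂ ψ (F.app (X n) ψ) : ℂ))
      (∑ n ∈ ({0, 1} : Finset ℕ), (inner ℂ ψ (F.app (X n) ψ) : ℂ)) :=
    hasSum_sum_of_ne_finset_zero hzero
  have hsum : ∑ n ∈ ({0, 1} : Finset ℕ), (inner ℂ ψ (F.app (X n) ψ) : ℂ)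
      = inner ℂ ψ (F.app Z₁ ψ) + inner ℂ ψ (F.app Z₂ ψ) := by
    rw [Finset.sum_pair (by norm_num : (0 : ℕ) ≠ 1)]
    simp [X]
  rw [hsum] at hs2
  exact hs.unique hs2

/-- Monotonicity of an observable: larger sets give larger effects. -/
lemma Observable.isPositive_sub {Ω : Type*} [MeasurableSpace Ω] (F : Observable H Ω)
    {Z₁ Z₂ : Set Ω} (h1 : MeasurableSet Z₁) (h2 : MeasurableSet Z₂) (hsub : Z₁ ⊆ Z₂) :
    (F.app Z₂ - F.app Z₁).IsPositive := by
  have hdiff : MeasurableSet (Z₂ \ Z₁) := h2.diff h1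
  have hun : Z₁ ∪ Z₂ \ Z₁ = Z₂ := Set.union_diff_cancel hsub
  have key : ∀ ψ : H, (inner ℂ ψ ((F.app Z₂ - F.app Z₁) ψ) : ℂ)
      = inner ℂ ψ (F.app (Z₂ \ Z₁) ψ) := by
    intro ψ
    have h := F.inner_app_union ψ h1 hdiff disjoint_sdiff_self_right
    rw [hun] at h
    simp only [ContinuousLinearMap.sub_apply, inner_sub_right, h]
    ring
  constructor
  · exact ContinuousLinearMap.isSelfAdjoint_iff_isSymmetric.mp
      (((F.isPositive _ h2).isSelfAdjoint).sub ((F.isPositive _ h1).isSelfAdjoint))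
  · intro x
    have hx := key x
    have h0 := (F.isPositive _ hdiff).re_inner_nonneg_right x
    rw [ContinuousLinearMap.reApplyInnerSelf_apply, ← inner_re_symm, hx]
    exact h0

/-- The quadratic form of a positive operator is real and nonnegative. -/
lemma pos_quadform_nonneg {T : H →L[ℂ] H} (hT : T.IsPositive) (ψ : H) :
    ∃ r : ℝ, 0 ≤ r ∧ (inner ℂ ψ (T ψ) : ℂ) = r := by
  have hsym := (ContinuousLinearMap.isSelfAdjoint_iff_isSymmetric.mp hT.isSelfAdjoint)
  have hconj : (starRingEnd ℂ) (inner ℂ ψ (T ψ) : ℂ) = (inner ℂ ψ (T ψ) : ℂ) := by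
    rw [inner_conj_symm]
    exact hsym ψ ψ
  have hre : ((inner ℂ ψ (T ψ) : ℂ).re : ℂ) = (inner ℂ ψ (T ψ) : ℂ) :=
    Complex.conj_eq_iff_re.mp hconj
  refine ⟨(inner ℂ ψ (T ψ) : ℂ).re, ?_, hre.symm⟩
  have := hT.re_inner_nonneg_right ψ
  simpa using this

/-- A bounded operator on a complex Hilbert space is determined by its quadratic form. -/
lemma ext_inner_self {T U : H →L[ℂ] H}
    (h : ∀ ψ : H, (inner ℂ ψ (T ψ) : ℂ) = inner ℂ ψ (U ψ)) : T = U := by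
  have hsub : ((T - U : H →L[ℂ] H) : H →ₗ[ℂ] H) = 0 := by
    rw [← inner_map_self_eq_zero]
    intro x
    have hx : (inner ℂ x ((T - U) x) : ℂ) = 0 := by
      simp [ContinuousLinearMap.sub_apply, inner_sub_right, h x]
    calc (inner ℂ ((T - U) x) x : ℂ) = (starRingEnd ℂ) (inner ℂ x ((T - U) x) : ℂ) := by
          rw [inner_conj_symm]
      _ = 0 := by rw [hx]; simp
  have : (T - U : H →L[ℂ] H) = 0 := by
    ext x
    have := congrArg (fun (f : H →ₗ[ℂ] H) => f x) hsub
    simpa using this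
  exact sub_eq_zero.mp this

/-- if `G` is the greatest joint observable of `A` and `B` (that is, each
`G(X × Y)` is the greatest element of `lb(A(X), B(Y))`), then `G` is the unique joint
observable of `A` and `B`. -/
theorem greatest_joint_observable_unique
    {H : Type*} [NormedAddCommGroup H] [InnerProductSpace ℂ H] [CompleteSpace H]
    [TopologicalSpace.SeparableSpace H]
    {Ω₁ Ω₂ : Type*} [MeasurableSpace Ω₁] [MeasurableSpace Ω₂]
    (A : Observable H Ω₁) (B : Observable H Ω₂)
    (G : Observable H (Ω₁ × Ω₂)) (hG : IsJointObservable A B G)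
    (hGreatest : ∀ (X : Set Ω₁) (Y : Set Ω₂), MeasurableSet X → MeasurableSet Y →
      ∀ C : H →L[ℂ] H, C.IsPositive → ((1 : H →L[ℂ] H) - C).IsPositive →
        (A.app X - C).IsPositive → (B.app Y - C).IsPositive →
        (G.app (X ×ˢ Y) - C).IsPositive)
    (F : Observable H (Ω₁ × Ω₂)) (hF : IsJointObservable A B F) :
    ∀ Z : Set (Ω₁ × Ω₂), MeasurableSet Z → F.app Z = G.app Z := by
  -- F(X×Y) is a lower bound of A(X), B(Y); hence F(X×Y) ≤ G(X×Y) for all rectangles.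
  have hle : ∀ (X : Set Ω₁) (Y : Set Ω₂), MeasurableSet X → MeasurableSet Y →
      (G.app (X ×ˢ Y) - F.app (X ×ˢ Y)).IsPositive := by
    intro X Y hX hY
    refine hGreatest X Y hX hY _ (F.isPositive _ (hX.prod hY)) ?_ ?_ ?_
    · have h := F.isPositive_sub (hX.prod hY) MeasurableSet.univ (Set.subset_univ _)
      rwa [F.app_univ] at h
    · have hsub : (X ×ˢ Y) ⊆ X ×ˢ (Set.univ : Set Ω₂) :=
        Set.prod_mono le_rfl (Set.subset_univ _)
      have h := F.isPositive_sub (hX.prod hY) (hX.prod MeasurableSet.univ) hsub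
      rwa [hF.1 X hX] at h
    · have hsub : (X ×ˢ Y) ⊆ (Set.univ : Set Ω₁) ×ˢ Y :=
        Set.prod_mono (Set.subset_univ _) le_rfl
      have h := F.isPositive_sub (hX.prod hY) (MeasurableSet.univ.prod hY) hsub
      rwa [hF.2 Y hY] at h
  intro Z hZ
  refine MeasurableSpace.induction_on_inter (C := fun s _ => F.app s = G.app s)
    generateFrom_prod.symm isPiSystem_prod ?_ ?_ ?_ ?_ Z hZ
  · exact ext_inner_self fun ψ => by rw [F.inner_app_empty, G.inner_app_empty]
  · rintro t ⟨X, hX, Y, hY, rfl⟩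
    have hX : MeasurableSet X := hX
    have hY : MeasurableSet Y := hY
    have hXY : MeasurableSet (X ×ˢ Y) := hX.prod hY
    have hXYc : MeasurableSet (X ×ˢ Yᶜ) := hX.prod hY.compl
    have d1 := hle X Y hX hY
    have d2 := hle X Yᶜ hX hY.compl
    refine ext_inner_self fun ψ => ?_
    obtain ⟨r₁, hr₁, he₁⟩ := pos_quadform_nonneg d1 ψ
    obtain ⟨r₂, hr₂, he₂⟩ := pos_quadform_nonneg d2 ψ
    have hdis : Disjoint (X ×ˢ Y) (X ×ˢ Yᶜ) := by
      rw [Set.disjoint_left]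
      rintro ⟨a, b⟩ ⟨_, hb⟩ ⟨_, hb'⟩
      exact hb' hb
    have hun : (X ×ˢ Y) ∪ (X ×ˢ Yᶜ) = X ×ˢ (Set.univ : Set Ω₂) := by
      rw [← Set.prod_union]
      simp
    have eF := F.inner_app_union ψ hXY hXYc hdis
    rw [hun, hF.1 X hX] at eF
    have eG := G.inner_app_union ψ hXY hXYc hdis
    rw [hun, hG.1 X hX] at eG
    have hsum : (r₁ : ℂ) + r₂ = 0 := by
      rw [← he₁, ← he₂]
      simp only [ContinuousLinearMap.sub_apply, inner_sub_right]
      linear_combination eF - eG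
    have hsumr : r₁ + r₂ = 0 := by exact_mod_cast hsum
    have hr10 : r₁ = 0 := by linarith
    have : (inner ℂ ψ ((G.app (X ×ˢ Y) - F.app (X ×ˢ Y)) ψ) : ℂ) = 0 := by
      rw [he₁, hr10]; simp
    simp only [ContinuousLinearMap.sub_apply, inner_sub_right, sub_eq_zero] at this
    exact this.symm
  · intro t htm ht
    refine ext_inner_self fun ψ => ?_
    have eF := F.inner_app_union ψ htm htm.compl disjoint_compl_right
    rw [Set.union_compl_self, F.app_univ, ht] at eF
    have eG := G.inner_app_union ψ htm htm.compl disjoint_compl_right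
    rw [Set.union_compl_self, G.app_univ] at eG
    linear_combination eG - eF
  · intro f hfd hfm hC
    refine ext_inner_self fun ψ => ?_
    have hsF := F.hasSum ψ f hfm hfd
    have hsG := G.hasSum ψ f hfm hfd
    have heq : (fun n => (inner ℂ ψ (F.app (f n) ψ) : ℂ))
        = fun n => (inner ℂ ψ (G.app (f n) ψ) : ℂ) := funext fun n => by rw [hC n]
    rw [heq] at hsF
    exact hsF.unique hsG
end
end
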